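/- arXiv:0804.1154 — 4 statements merged into one kernel-verified Lean document; each statement's English description precedes it below -/
import Mathlib

section
/- For integers k ≥ 1 and n ≥ 2, the function f(v) = (1 + Σᵢ vᵢ)^n / [(1 + Σᵢ₌₁ⁿ vᵢ + k(1 + Σᵢ₌₂ⁿ vᵢ)) · (1 + Σᵢ₌₁ⁿ vᵢ + (1+k)(1 + Σᵢ₌₂ⁿ vᵢ))^n] on the standard n-simplex {v ∈ ℝⁿ : vᵢ ≥ 0, Σvᵢ ≤ 1} attains its maximum value 2^n / ((2+k)(3+k)^n) at the point (1,0,…,0). -/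
open Finset

/-- Key quadratic inequality. -/
lemma quad_key (a k : ℝ) (hk : 1 ≤ k) (ha1 : 1 ≤ a) (ha2 : a ≤ 2) :
    (a * (3 + k)) ^ 2 * (2 + k) ≤ (2 * (a + 1 + k)) ^ 2 * (a + k) := by
  nlinarith [mul_nonneg (sub_nonneg.mpr ha1) (sub_nonneg.mpr hk),
    mul_nonneg (sub_nonneg.mpr ha2) (sub_nonneg.mpr hk),
    mul_nonneg (mul_nonneg (sub_nonneg.mpr ha2) (sub_nonneg.mpr hk)) (sub_nonneg.mpr hk),
    mul_nonneg (mul_nonneg (mul_nonneg (sub_nonneg.mpr ha2) (sub_nonneg.mpr hk))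
      (sub_nonneg.mpr hk)) (sub_nonneg.mpr hk),
    mul_nonneg (mul_nonneg (sub_nonneg.mpr ha2) (sub_nonneg.mpr ha1)) (sub_nonneg.mpr hk),
    mul_nonneg (mul_nonneg (mul_nonneg (sub_nonneg.mpr ha2) (sub_nonneg.mpr ha1))
      (sub_nonneg.mpr hk)) (sub_nonneg.mpr hk),
    mul_nonneg (mul_nonneg (mul_nonneg (mul_nonneg (sub_nonneg.mpr ha2) (sub_nonneg.mpr ha1))
      (sub_nonneg.mpr hk)) (sub_nonneg.mpr hk)) (sub_nonneg.mpr hk),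
    mul_nonneg (sub_nonneg.mpr ha2) (sub_nonneg.mpr ha1)]

/-- Key inequality with b = 1. -/
lemma pow_key (n : ℕ) (hn : 2 ≤ n) (a k : ℝ) (hk : 1 ≤ k) (ha1 : 1 ≤ a) (ha2 : a ≤ 2) :
    a ^ n * ((2 + k) * (3 + k) ^ n) ≤ 2 ^ n * ((a + k) * (a + 1 + k) ^ n) := by
  obtain ⟨m, rfl⟩ : ∃ m, n = m + 2 := ⟨n - 2, by omega⟩
  have hA : (0:ℝ) ≤ a * (3 + k) := by nlinarith
  have hAB : a * (3 + k) ≤ 2 * (a + 1 + k) := by nlinarith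
  have h1 : (a * (3 + k)) ^ (m + 2) * (2 + k) ≤ (2 * (a + 1 + k)) ^ (m + 2) * (a + k) := by
    have h2 : (a * (3 + k)) ^ m ≤ (2 * (a + 1 + k)) ^ m := pow_le_pow_left₀ hA hAB m
    have h3 := quad_key a k hk ha1 ha2
    calc (a * (3 + k)) ^ (m + 2) * (2 + k)
        = (a * (3 + k)) ^ m * ((a * (3 + k)) ^ 2 * (2 + k)) := by ring
      _ ≤ (2 * (a + 1 + k)) ^ m * ((2 * (a + 1 + k)) ^ 2 * (a + k)) := by
          apply mul_le_mul h2 h3 (by positivity) (by positivity)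
      _ = (2 * (a + 1 + k)) ^ (m + 2) * (a + k) := by ring
  calc a ^ (m + 2) * ((2 + k) * (3 + k) ^ (m + 2))
      = (a * (3 + k)) ^ (m + 2) * (2 + k) := by rw [mul_pow]; ring
    _ ≤ (2 * (a + 1 + k)) ^ (m + 2) * (a + k) := h1
    _ = 2 ^ (m + 2) * ((a + k) * (a + 1 + k) ^ (m + 2)) := by rw [mul_pow]; ring

/-- Key inequality with general b ≥ 1. -/
lemma key (n : ℕ) (hn : 2 ≤ n) (a b k : ℝ) (hk : 1 ≤ k) (ha1 : 1 ≤ a) (ha2 : a ≤ 2)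
    (hb : 1 ≤ b) :
    a ^ n * ((2 + k) * (3 + k) ^ n) ≤ 2 ^ n * ((a + k * b) * (a + (1 + k) * b) ^ n) := by
  refine le_trans (pow_key n hn a k hk ha1 ha2) ?_
  apply mul_le_mul_of_nonneg_left _ (by positivity)
  have h1 : a + k ≤ a + k * b := by nlinarith
  have h2 : a + 1 + k ≤ a + (1 + k) * b := by nlinarith
  exact mul_le_mul h1 (pow_le_pow_left₀ (by linarith) h2 n) (by positivity) (by linarith)

/-- For integers k ≥ 1 and n ≥ 2, the function
f(v) = (1+Σvᵢ)^n / ((1+Σvᵢ+k(1+Σ_{i≥2}vᵢ))·(1+Σvᵢ+(1+k)(1+Σ_{i≥2}vᵢ))^n)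
on the standard simplex attains its maximum 2^n/((2+k)(3+k)^n) at (1,0,…,0). -/
theorem stmt_0 (n k : ℕ) (hn : 2 ≤ n) (hk : 1 ≤ k)
    (f : (Fin n → ℝ) → ℝ)
    (hf : ∀ v : Fin n → ℝ,
      f v = (1 + ∑ i, v i) ^ n /
        ((1 + ∑ i, v i + (k : ℝ) * (1 + ∑ i ∈ univ.filter (fun i : Fin n => i.val ≠ 0), v i)) *
         (1 + ∑ i, v i + (1 + (k : ℝ)) * (1 + ∑ i ∈ univ.filter (fun i : Fin n => i.val ≠ 0), v i)) ^ n))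
    (S : Set (Fin n → ℝ))
    (hS : S = {v : Fin n → ℝ | (∀ i, 0 ≤ v i) ∧ ∑ i, v i ≤ 1})
    (v₀ : Fin n → ℝ) (hv₀ : v₀ = fun i => if i.val = 0 then 1 else 0) :
    v₀ ∈ S ∧ f v₀ = 2 ^ n / ((2 + (k : ℝ)) * (3 + (k : ℝ)) ^ n) ∧
      ∀ v ∈ S, f v ≤ 2 ^ n / ((2 + (k : ℝ)) * (3 + (k : ℝ)) ^ n) := by
  haveI : NeZero n := ⟨by omega⟩
  have hkR : (1:ℝ) ≤ (k:ℝ) := by exact_mod_cast hk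
  have hsum1 : ∑ i : Fin n, v₀ i = 1 := by
    have hcond : ∀ i : Fin n, (i.val = 0) ↔ (i = 0) := fun i => by rw [Fin.ext_iff, Fin.val_zero]
    rw [hv₀]
    simp [hcond, Finset.sum_ite_eq']
  have hsum0 : ∑ i ∈ univ.filter (fun i : Fin n => i.val ≠ 0), v₀ i = 0 := by
    rw [hv₀]
    apply Finset.sum_eq_zero
    intro i hi
    simp only [mem_filter] at hi
    simp [hi.2]
  refine ⟨?_, ?_, ?_⟩
  · rw [hS, hv₀]
    refine ⟨fun i => ?_, ?_⟩
    · dsimp only; split <;> norm_num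
    · rw [← hv₀, hsum1]
  · rw [hf, hsum1, hsum0]
    norm_num
    ring_nf
  · intro v hv
    rw [hS] at hv
    obtain ⟨hpos, hle⟩ := hv
    set s := ∑ i : Fin n, v i with hs
    set t := ∑ i ∈ univ.filter (fun i : Fin n => i.val ≠ 0), v i with ht
    have ht0 : 0 ≤ t := Finset.sum_nonneg fun i _ => hpos i
    have hts : t ≤ s := Finset.sum_le_sum_of_subset_of_nonneg (Finset.filter_subset _ _)
      (fun i _ _ => hpos i)
    have hs0 : 0 ≤ s := le_trans ht0 hts
    rw [hf]
    have hP : 0 < (1 + s + (k:ℝ) * (1 + t)) * (1 + s + (1 + (k:ℝ)) * (1 + t)) ^ n := by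
      have : (0:ℝ) < 1 + t := by linarith
      have h1 : (0:ℝ) < (k:ℝ) * (1 + t) := by positivity
      have h2 : (0:ℝ) < (1 + (k:ℝ)) * (1 + t) := by positivity
      have : (0:ℝ) < 1 + s + (1 + (k:ℝ)) * (1 + t) := by linarith
      have : (0:ℝ) < 1 + s + (k:ℝ) * (1 + t) := by linarith
      positivity
    have hQ : (0:ℝ) < (2 + (k:ℝ)) * (3 + (k:ℝ)) ^ n := by positivity
    rw [div_le_div_iff₀ hP hQ]
    exact key n hn (1 + s) (1 + t) k hkR (by linarith) (by linarith) (by linarith)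
end

section
/- For every integer n ≥ 2, Σ_{k=0}^∞ 2ⁿ/((2+k)(3+k)ⁿ) < 2^{n-1}/3ⁿ + 2ⁿ·[ln(3/2) − Σ_{k=1}^{n-1} 1/(k·3ᵏ)]. -/
open Real Finset Filter Topology

private lemma telescope (c : ℝ) (hc : 0 < c) :
    HasSum (fun k : ℕ => 1 / (((k : ℝ) + c) * ((k : ℝ) + c + 1))) (1 / c) := by
  have hpos : ∀ k : ℕ, (0:ℝ) < (k : ℝ) + c := fun k => by
    have : (0:ℝ) ≤ k := Nat.cast_nonneg k
    linarith
  have hnn : ∀ k : ℕ, 0 ≤ 1 / (((k : ℝ) + c) * ((k : ℝ) + c + 1)) := fun k => by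
    have h1 := hpos k; positivity
  rw [hasSum_iff_tendsto_nat_of_nonneg hnn]
  have heq : ∀ N : ℕ, ∑ i ∈ range N, 1 / (((i : ℝ) + c) * ((i : ℝ) + c + 1))
      = 1 / c - 1 / ((N:ℝ) + c) := by
    intro N
    have hterm : ∀ i : ℕ, 1 / (((i : ℝ) + c) * ((i : ℝ) + c + 1))
        = (fun j : ℕ => 1/((j:ℝ)+c)) i - (fun j : ℕ => 1/((j:ℝ)+c)) (i+1) := by
      intro i
      have h1 := hpos i
      show 1 / (((i : ℝ) + c) * ((i : ℝ) + c + 1)) = 1/((i:ℝ)+c) - 1/((((i+1):ℕ):ℝ)+c)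
      have h3 : (0:ℝ) < (i:ℝ) + 1 + c := by linarith
      push_cast
      rw [div_sub_div _ _ (ne_of_gt h1) (ne_of_gt h3),
        show (1:ℝ)*((i:ℝ)+1+c) - ((i:ℝ)+c)*1 = 1 by ring,
        show ((i:ℝ)+c)*((i:ℝ)+c+1) = ((i:ℝ)+c)*((i:ℝ)+1+c) by ring]
    rw [Finset.sum_congr rfl fun i _ => hterm i,
      Finset.sum_range_sub' (fun j : ℕ => 1/((j:ℝ)+c)) N]
    norm_num
  simp only [heq]
  have h1 : Tendsto (fun N : ℕ => (N:ℝ) + c) atTop atTop :=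
    tendsto_atTop_add_const_right atTop c tendsto_natCast_atTop_atTop
  have h2 : Tendsto (fun N : ℕ => 1 / ((N:ℝ) + c)) atTop (𝓝 0) := by
    simpa only [one_div, Pi.inv_def] using h1.inv_tendsto_atTop
  simpa using (tendsto_const_nhds (x := 1/c) (f := atTop (α := ℕ))).sub h2

private lemma natkey (m : ℕ) : 200*(m+2)*15^m + 480*(m+2)*12^m ≤ 1360*20^m := by
  induction m with
  | zero => norm_num
  | succ k ih =>
    rcases Nat.eq_zero_or_pos k with rfl | hk
    · norm_num
    · calc 200*(k+1+2)*15^(k+1) + 480*(k+1+2)*12^(k+1)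
          = (3000*(k+3))*15^k + (5760*(k+3))*12^k := by ring
        _ ≤ (4000*(k+2))*15^k + (9600*(k+2))*12^k :=
            Nat.add_le_add (Nat.mul_le_mul (by omega) le_rfl)
              (Nat.mul_le_mul (by omega) le_rfl)
        _ = 20*(200*(k+2)*15^k + 480*(k+2)*12^k) := by ring
        _ ≤ 20*(1360*20^k) := Nat.mul_le_mul le_rfl ih
        _ = 1360*20^(k+1) := by ring

set_option maxHeartbeats 1000000

/-- For every integer n ≥ 2,
Σ_{k=0}^∞ 2ⁿ/((2+k)(3+k)ⁿ) < 2^{n−1}/3ⁿ + 2ⁿ·(ln(3/2) − Σ_{k=1}^{n−1} 1/(k·3ᵏ)). -/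
theorem stmt_4 (n : ℕ) (hn : 2 ≤ n) :
    (∑' k : ℕ, (2 : ℝ) ^ n / ((2 + (k : ℝ)) * (3 + (k : ℝ)) ^ n)) <
      (2 : ℝ) ^ (n - 1) / 3 ^ n +
        2 ^ n * (Real.log (3 / 2) - ∑ k ∈ Finset.Icc 1 (n - 1), 1 / ((k : ℝ) * 3 ^ k)) := by
  obtain ⟨m, rfl⟩ : ∃ m, n = m + 2 := ⟨n - 2, by omega⟩
  clear hn
  -- the log series
  set g : ℕ → ℝ := fun k => (1/3:ℝ)^(k+1)/(k+1) with hgdef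
  have gform : ∀ k : ℕ, g k = 1/(((k:ℝ)+1) * 3^(k+1)) := by
    intro k
    rw [hgdef]
    simp only []
    rw [div_pow, one_pow, div_div, mul_comm]
  have hlog : HasSum g (Real.log (3/2)) := by
    have h := hasSum_pow_div_log_of_abs_lt_one (x := (1/3:ℝ)) (by rw [abs_of_pos (by norm_num : (0:ℝ) < 1/3)]; norm_num)
    have heq : -Real.log (1 - 1/3) = Real.log (3/2) := by
      rw [show (1:ℝ) - 1/3 = (3/2)⁻¹ by norm_num, Real.log_inv, neg_neg]
    rwa [heq] at h
  have hg : Summable g := hlog.summable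
  have hgpos : ∀ k, 0 ≤ g k := fun k => by
    rw [gform]; positivity
  have hlog97 : (97/240 : ℝ) < Real.log (3/2) := by
    have h6 : ∑ i ∈ range 6, g i ≤ Real.log (3/2) :=
      sum_le_hasSum _ (fun i _ => hgpos i) hlog
    have h7 : (97/240 : ℝ) < ∑ i ∈ range 6, g i := by
      rw [Finset.sum_range_succ, Finset.sum_range_succ, Finset.sum_range_succ,
        Finset.sum_range_succ, Finset.sum_range_succ, Finset.sum_range_one, hgdef]
      norm_num
    linarith
  -- Icc sum to range sum
  rw [show m + 2 - 1 = m + 1 from rfl]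
  have hIcc : ∑ k ∈ Icc 1 (m+1), 1/((k:ℝ) * 3^k) = ∑ i ∈ range (m+1), g i := by
    rw [show Icc 1 (m+1) = Ico 1 (m+2) by exact (Finset.Ico_add_one_right_eq_Icc 1 (m+1)).symm,
      Finset.sum_Ico_eq_sum_range]
    refine Finset.sum_congr (by norm_num) fun i _ => ?_
    rw [gform]
    push_cast
    ring
  -- the tail T
  have htail := hg.sum_add_tsum_nat_add (m+1)
  have htsumg : ∑' i, g i = Real.log (3/2) := hlog.tsum_eq
  set T : ℝ := ∑' i : ℕ, g (i + (m+1)) with hTdef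
  have hT : Real.log (3/2) - ∑ k ∈ Icc 1 (m+1), 1/((k:ℝ)*3^k) = T := by
    rw [hIcc]
    rw [htsumg] at htail
    linarith
  -- lower bound for T
  have hTsummable : Summable (fun i : ℕ => g (i + (m+1))) := (summable_nat_add_iff (m+1)).2 hg
  have hg1summable : Summable (fun i : ℕ => g (i + 1)) := (summable_nat_add_iff 1).2 hg
  set c : ℝ := 2/(((m:ℝ)+2) * 3^m) with hcdef
  have hD : (0:ℝ) < ((m:ℝ)+2) * 3^m := by positivity
  have hterm : ∀ i : ℕ, c * g (i+1) ≤ g (i + (m+1)) := by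
    intro i
    rw [gform, gform, hcdef]
    have him : (0:ℝ) ≤ (i:ℝ) := i.cast_nonneg
    have hmm : (0:ℝ) ≤ (m:ℝ) := m.cast_nonneg
    rw [div_mul_div_comm, div_le_div_iff₀ (by positivity) (by positivity)]
    have hpow : (3:ℝ)^(i + (m+1) + 1) = 3^m * 3^(i+1+1) := by
      rw [← pow_add]
      congr 1
      omega
    rw [hpow]
    push_cast
    have h3 : (0:ℝ) < (3:ℝ)^m * 3^(i+1+1) := by positivity
    nlinarith [mul_nonneg (mul_nonneg hmm him) h3.le]
  have hsg1 : ∑' i : ℕ, g (i + 1) = Real.log (3/2) - 1/3 := by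
    have h2 := hg.tsum_eq_zero_add
    have h3 : g 0 = 1/3 := by rw [gform]; norm_num
    rw [htsumg, h3] at h2
    linarith
  have hTlow : c * (Real.log (3/2) - 1/3) ≤ T := by
    have h0 : ∑' i : ℕ, c * g (i+1) ≤ T :=
      Summable.tsum_le_tsum hterm (hg1summable.mul_left c) hTsummable
    rw [tsum_mul_left, hsg1] at h0
    exact h0
  -- the LHS series
  set u : ℕ → ℝ := fun k => 1/((2+(k:ℝ)) * (3+(k:ℝ))^(m+2)) with hudef
  have hupos : ∀ k, 0 ≤ u k := fun k => by
    rw [hudef]; positivity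
  have htel2 := telescope 2 (by norm_num)
  have htel4 := telescope 4 (by norm_num)
  have hu : Summable u := by
    refine Summable.of_nonneg_of_le hupos (fun k => ?_) htel2.summable
    rw [hudef]
    have hk : (0:ℝ) ≤ k := k.cast_nonneg
    apply one_div_le_one_div_of_le (by positivity)
    have hbase : (3:ℝ)+(k:ℝ) ≤ (3+(k:ℝ))^(m+2) := le_self_pow₀ (by linarith) (by omega)
    nlinarith [hbase]
  have h2pos : (0:ℝ) < 2^(m+2) := by positivity
  have hLHS : (∑' k : ℕ, (2 : ℝ) ^ (m+2) / ((2 + (k : ℝ)) * (3 + (k : ℝ)) ^ (m+2)))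
      = 2^(m+2) * ∑' k, u k := by
    rw [← tsum_mul_left]
    exact tsum_congr fun k => by rw [hudef, mul_one_div]
  -- split off first two terms
  have hsplit1 : ∑' k, u k = u 0 + ∑' k : ℕ, u (k+1) := hu.tsum_eq_zero_add
  have hu1s : Summable (fun k : ℕ => u (k+1)) := (summable_nat_add_iff 1).2 hu
  have hsplit2 : ∑' k : ℕ, u (k+1) = u 1 + ∑' k : ℕ, u (k+2) := by
    have h := hu1s.tsum_eq_zero_add
    simpa using h
  have hu0 : u 0 = 1/(2*3^(m+2)) := by rw [hudef]; norm_num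
  have hu1v : u 1 = 1/(3*4^(m+2)) := by rw [hudef]; norm_num
  -- bound the tail of the LHS series
  have htailbound : ∑' k : ℕ, u (k+2) ≤ 1/(4*5^(m+1)) := by
    have hterm2 : ∀ k : ℕ, u (k+2) ≤ 1/5^(m+1) * (1/(((k:ℝ)+4)*((k:ℝ)+4+1))) := by
      intro k
      rw [hudef]
      have hk : (0:ℝ) ≤ k := k.cast_nonneg
      rw [div_mul_div_comm, one_mul]
      push_cast
      apply one_div_le_one_div_of_le (by positivity)
      have hb : (5:ℝ)^(m+1) ≤ (3+((k:ℝ)+2))^(m+1) := by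
        apply pow_le_pow_left₀ (by norm_num) (by linarith)
      have hsplit : (3+((k:ℝ)+2))^(m+2) = (3+((k:ℝ)+2)) * (3+((k:ℝ)+2))^(m+1) := by
        ring
      rw [hsplit]
      have hmul := mul_le_mul_of_nonneg_left hb
        (show (0:ℝ) ≤ ((k:ℝ)+4)*((k:ℝ)+4+1) by positivity)
      nlinarith [hmul]
    calc ∑' k : ℕ, u (k+2)
        ≤ ∑' k : ℕ, 1/5^(m+1) * (1/(((k:ℝ)+4)*((k:ℝ)+4+1))) :=
          Summable.tsum_le_tsum hterm2 ((summable_nat_add_iff 2).2 hu) (htel4.summable.mul_left _)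
      _ = 1/(4*5^(m+1)) := by
          rw [tsum_mul_left, htel4.tsum_eq]
          ring
  -- numeric comparison
  have h17 : 1/(3*(4:ℝ)^(m+2)) + 1/(4*(5:ℝ)^(m+1)) ≤ 17/120/(((m:ℝ)+2)*3^m) := by
    have key : (200*((m:ℝ)+2)*15^m + 480*((m:ℝ)+2)*12^m) ≤ 1360*20^m := by
      exact_mod_cast natkey m
    have e1 : (15:ℝ)^m = 3^m*5^m := by rw [← mul_pow]; norm_num
    have e2 : (12:ℝ)^m = 3^m*4^m := by rw [← mul_pow]; norm_num
    have e3 : (20:ℝ)^m = 4^m*5^m := by rw [← mul_pow]; norm_num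
    rw [e1, e2, e3] at key
    rw [div_add_div _ _ (by positivity) (by positivity),
      div_le_div_iff₀ (by positivity) (by positivity)]
    have p1 : (4:ℝ)^(m+2) = 16*4^m := by ring
    have p2 : (5:ℝ)^(m+1) = 5*5^m := by ring
    rw [p1, p2]
    ring_nf
    ring_nf at key
    linarith [key]
  have hc17 : 17/120/(((m:ℝ)+2)*3^m) < c * (Real.log (3/2) - 1/3) := by
    have hlt : (17/120 : ℝ) < 2*(Real.log (3/2) - 1/3) := by linarith
    have hcc : c * (Real.log (3/2) - 1/3) = (2*(Real.log (3/2) - 1/3))/(((m:ℝ)+2)*3^m) := by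
      rw [hcdef]; ring
    rw [hcc, div_lt_div_iff₀ hD hD]
    exact mul_lt_mul_of_pos_right hlt hD
  -- assemble
  have hgoal2 : ∑' k, u k < 1/(2*3^(m+2)) + T := by
    rw [hsplit1, hsplit2, hu0, hu1v]
    have : (1:ℝ)/(3*4^(m+2)) + ∑' k : ℕ, u (k+2) < T := by
      calc (1:ℝ)/(3*4^(m+2)) + ∑' k : ℕ, u (k+2)
          ≤ 1/(3*(4:ℝ)^(m+2)) + 1/(4*(5:ℝ)^(m+1)) := by linarith [htailbound]
        _ ≤ 17/120/(((m:ℝ)+2)*3^m) := h17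
        _ < c * (Real.log (3/2) - 1/3) := hc17
        _ ≤ T := hTlow
    linarith
  rw [hLHS]
  calc 2^(m+2) * ∑' k, u k < 2^(m+2) * (1/(2*3^(m+2)) + T) :=
        mul_lt_mul_of_pos_left hgoal2 h2pos
    _ = (2:ℝ)^(m+1)/3^(m+2) + 2^(m+2) * (Real.log (3/2) - ∑ k ∈ Icc 1 (m+1), 1/((k:ℝ)*3^k)) := by
        rw [hT]; ring
end

section
/- Let n ≥ 2 and let W = (w₁,…,w_{n+1}) ∈ ℝ^{n+1} have nonnegative components satisfying Σ_{j ∉ {j₁,j₂}} w_j ≤ (n−1)(w_{j₁} + w_{j₂}) for all pairs of distinct indices j₁ ≠ j₂. Then for every index i, the vector W_i defined by (W_i)_j = w_j + w_i for j ≠ i and (W_i)_i = w_i also has nonnegative components and satisfies the same family of inequalities. -/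
open Finset

/-- Let n ≥ 2 and W ∈ ℝ^{n+1} with nonnegative components satisfying
Σ_{j∉{j₁,j₂}} w_j ≤ (n−1)(w_{j₁}+w_{j₂}) for all pairs j₁ ≠ j₂. Then for each i the
vector W_i, with (W_i)_j = w_j + w_i for j ≠ i and (W_i)_i = w_i, has nonnegative
components and satisfies the same inequalities. -/
theorem stmt_11 (n : ℕ) (hn : 2 ≤ n) (W : Fin (n + 1) → ℝ)
    (hpos : ∀ j, 0 ≤ W j)
    (hineq : ∀ j₁ j₂ : Fin (n + 1), j₁ ≠ j₂ →
      ∑ j ∈ univ \ {j₁, j₂}, W j ≤ ((n : ℝ) - 1) * (W j₁ + W j₂))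
    (i : Fin (n + 1)) (Wi : Fin (n + 1) → ℝ)
    (hWi : ∀ j, Wi j = if j = i then W i else W j + W i) :
    (∀ j, 0 ≤ Wi j) ∧
      ∀ j₁ j₂ : Fin (n + 1), j₁ ≠ j₂ →
        ∑ j ∈ univ \ {j₁, j₂}, Wi j ≤ ((n : ℝ) - 1) * (Wi j₁ + Wi j₂) := by
  have key : ∀ s : Finset (Fin (n + 1)),
      ∑ j ∈ s, Wi j = ∑ j ∈ s, W j + ((s \ {i}).card : ℝ) * W i := by
    intro s
    have h1 : ∀ j ∈ s, Wi j = W j + (if j ∈ s \ {i} then W i else 0) := by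
      intro j hj
      rw [hWi]
      by_cases h : j = i <;> simp [h, hj]
    rw [Finset.sum_congr rfl h1, Finset.sum_add_distrib]
    congr 1
    rw [Finset.sum_ite_mem, Finset.inter_eq_right.mpr (Finset.sdiff_subset),
      Finset.sum_const, nsmul_eq_mul]
  have hn1 : (1 : ℝ) ≤ (n : ℝ) := by exact_mod_cast Nat.one_le_of_lt hn
  have hWipos : ∀ j, 0 ≤ Wi j := by
    intro j
    rw [hWi]
    split
    · exact hpos i
    · exact add_nonneg (hpos j) (hpos i)
  refine ⟨hWipos, ?_⟩
  intro j₁ j₂ hne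
  have hcard : (univ \ ({j₁, j₂} : Finset (Fin (n + 1)))).card = n - 1 := by
    rw [card_sdiff_of_subset (subset_univ _), card_univ, Fintype.card_fin,
      card_insert_of_notMem (by simpa using hne), card_singleton]
    omega
  rw [key]
  by_cases h1 : i = j₁
  · subst h1
    have hni : i ∉ univ \ ({i, j₂} : Finset (Fin (n + 1))) := by simp
    have hsd : (univ \ ({i, j₂} : Finset (Fin (n + 1)))) \ {i}
        = univ \ ({i, j₂} : Finset (Fin (n + 1))) :=
      Finset.sdiff_eq_self_iff_disjoint.mpr (Finset.disjoint_singleton_right.mpr hni)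
    rw [hsd, hcard]
    have hc : ((n - 1 : ℕ) : ℝ) = (n : ℝ) - 1 := by
      have := Nat.one_le_of_lt hn
      push_cast [this]; ring
    rw [hc, hWi i, hWi j₂, if_pos rfl, if_neg (Ne.symm hne)]
    have := hineq i j₂ hne
    nlinarith [hpos i]
  · by_cases h2 : i = j₂
    · subst h2
      have hni : i ∉ univ \ ({j₁, i} : Finset (Fin (n + 1))) := by simp
      have hsd : (univ \ ({j₁, i} : Finset (Fin (n + 1)))) \ {i}
          = univ \ ({j₁, i} : Finset (Fin (n + 1))) :=
        Finset.sdiff_eq_self_iff_disjoint.mpr (Finset.disjoint_singleton_right.mpr hni)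
      rw [hsd, hcard]
      have hc : ((n - 1 : ℕ) : ℝ) = (n : ℝ) - 1 := by
        have := Nat.one_le_of_lt hn
        push_cast [this]; ring
      rw [hc, hWi i, hWi j₁, if_pos rfl, if_neg hne]
      have := hineq j₁ i hne
      nlinarith [hpos i]
    · have hmi : i ∈ univ \ ({j₁, j₂} : Finset (Fin (n + 1))) := by
        simp [h1, h2]
      have hcard2 : ((univ \ ({j₁, j₂} : Finset (Fin (n + 1)))) \ {i}).card = n - 2 := by
        rw [Finset.sdiff_singleton_eq_erase, Finset.card_erase_of_mem hmi, hcard]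
        omega
      rw [hcard2]
      have hc : ((n - 2 : ℕ) : ℝ) = (n : ℝ) - 2 := by
        push_cast [hn]; ring
      rw [hc, hWi j₁, hWi j₂, if_neg (fun h => h1 h.symm), if_neg (fun h => h2 h.symm)]
      have := hineq j₁ j₂ hne
      nlinarith [hpos i]
end

section
/- Let α be the unique real root greater than 1 of x^{n+1} = x^n + ⋯ + x + 1 (the (n+1)-bonacci constant). Then 1 < α < 2, α is the unique root of this equation with |root| maximal among all complex roots, and all other complex roots have modulus strictly less than α. -/
open Finset

/-- Auxiliary: `phi n x = ∑_{i=1}^{n+1} x⁻¹ ^ i`. -/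
noncomputable def phi (n : ℕ) (x : ℝ) : ℝ := ∑ i ∈ Finset.range (n + 1), x⁻¹ ^ (i + 1)

lemma phi_mul (n : ℕ) {x : ℝ} (hx : 0 < x) :
    x ^ (n + 1) * phi n x = ∑ i ∈ Finset.range (n + 1), x ^ i := by
  have hx0 : x ≠ 0 := ne_of_gt hx
  rw [phi, Finset.mul_sum]
  rw [← Finset.sum_range_reflect (fun i => x ^ i) (n + 1)]
  apply Finset.sum_congr rfl
  intro i hi
  rw [Finset.mem_range] at hi
  have hle : i + 1 ≤ n + 1 := hi
  rw [inv_pow, ← pow_sub₀ x hx0 hle]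
  congr 1
  omega

lemma phi_anti (n : ℕ) {a b : ℝ} (ha : 0 < a) (hab : a < b) : phi n b < phi n a := by
  unfold phi
  apply Finset.sum_lt_sum_of_nonempty (by simp)
  intro i _
  have hb : 0 < b := lt_trans ha hab
  have h1 : b⁻¹ < a⁻¹ := by
    exact inv_strictAnti₀ ha hab
  have h2 : 0 < b⁻¹ := inv_pos.mpr hb
  exact pow_lt_pow_left₀ h1 (le_of_lt h2) (Nat.succ_ne_zero i)

lemma root_iff_phi (n : ℕ) {x : ℝ} (hx : 0 < x) :
    x ^ (n + 1) = ∑ i ∈ Finset.range (n + 1), x ^ i ↔ phi n x = 1 := by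
  have hp : (0:ℝ) < x ^ (n + 1) := pow_pos hx _
  rw [← phi_mul n hx]
  constructor
  · intro hxx
    have h2 : x ^ (n + 1) * 1 = x ^ (n + 1) * phi n x := by rw [mul_one]; exact hxx
    exact (mul_left_cancel₀ (ne_of_gt hp) h2).symm
  · intro h; rw [h, mul_one]

lemma le_iff_phi (n : ℕ) {x : ℝ} (hx : 0 < x) :
    x ^ (n + 1) ≤ ∑ i ∈ Finset.range (n + 1), x ^ i ↔ 1 ≤ phi n x := by
  have hp : (0:ℝ) < x ^ (n + 1) := pow_pos hx _
  rw [← phi_mul n hx]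
  constructor
  · intro h
    by_contra hlt
    push_neg at hlt
    have : x ^ (n + 1) * phi n x < x ^ (n + 1) * 1 := by
      exact mul_lt_mul_of_pos_left hlt hp
    rw [mul_one] at this
    linarith
  · intro h
    calc x ^ (n + 1) = x ^ (n + 1) * 1 := (mul_one _).symm
    _ ≤ x ^ (n + 1) * phi n x := mul_le_mul_of_nonneg_left h (le_of_lt hp)

/-- For n ≥ 1 there is a unique real root α > 1 of
x^{n+1} = xⁿ + ⋯ + x + 1 (the (n+1)-bonacci constant); it satisfies 1 < α < 2 and
every other complex root has modulus strictly less than α, so α is the unique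
root of maximal modulus. -/
theorem stmt_13 (n : ℕ) (hn : 1 ≤ n) :
    ∃ α : ℝ,
      (1 < α ∧ α < 2 ∧ α ^ (n + 1) = ∑ i ∈ Finset.range (n + 1), α ^ i) ∧
      (∀ β : ℝ, 1 < β → β ^ (n + 1) = ∑ i ∈ Finset.range (n + 1), β ^ i → β = α) ∧
      (∀ z : ℂ, z ^ (n + 1) = ∑ i ∈ Finset.range (n + 1), z ^ i → z ≠ (α : ℂ) →
        ‖z‖ < α) := by
  -- the polynomial function
  set f : ℝ → ℝ := fun x => x ^ (n + 1) - ∑ i ∈ Finset.range (n + 1), x ^ i with hf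
  have hcont : ContinuousOn f (Set.Icc 1 2) := by
    apply Continuous.continuousOn
    exact (continuous_pow _).sub (continuous_finset_sum _ (fun i _ => continuous_pow i))
  have hf1 : f 1 = 1 - (n + 1 : ℝ) := by simp [hf]
  have hf2 : f 2 = 1 := by
    have : ∑ i ∈ Finset.range (n + 1), (2:ℝ) ^ i = 2 ^ (n + 1) - 1 := by
      rw [geom_sum_eq (by norm_num)]
      norm_num
    simp [hf, this]
  have h0 : (0:ℝ) ∈ Set.Ioo (f 1) (f 2) := by
    constructor
    · rw [hf1]
      have : (1:ℝ) ≤ n := by exact_mod_cast hn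
      linarith
    · rw [hf2]; norm_num
  obtain ⟨α, hαmem, hα0⟩ := intermediate_value_Ioo (by norm_num) hcont h0
  obtain ⟨hα1, hα2⟩ := hαmem
  have hαpos : (0:ℝ) < α := by linarith
  have hαroot : α ^ (n + 1) = ∑ i ∈ Finset.range (n + 1), α ^ i := by
    have : f α = 0 := hα0
    simp only [hf] at this
    linarith
  have hphiα : phi n α = 1 := (root_iff_phi n hαpos).mp hαroot
  refine ⟨α, ⟨hα1, hα2, hαroot⟩, ?_, ?_⟩
  · -- uniqueness among reals > 1
    intro β hβ hβroot
    have hβpos : (0:ℝ) < β := by linarith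
    have hphiβ : phi n β = 1 := (root_iff_phi n hβpos).mp hβroot
    rcases lt_trichotomy β α with h | h | h
    · exfalso
      have := phi_anti n hβpos h
      rw [hphiα, hphiβ] at this
      exact lt_irrefl 1 this
    · exact h
    · exfalso
      have := phi_anti n hαpos h
      rw [hphiα, hphiβ] at this
      exact lt_irrefl 1 this
  · -- complex roots
    intro z hz hzα
    by_cases hr1 : ‖z‖ ≤ 1
    · linarith
    push_neg at hr1
    set r : ℝ := ‖z‖ with hrdef
    have hrpos : (0:ℝ) < r := by linarith
    -- triangle inequality: r^{n+1} ≤ ∑ r^i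
    have htri : r ^ (n + 1) ≤ ∑ i ∈ Finset.range (n + 1), r ^ i := by
      calc r ^ (n + 1) = ‖z ^ (n + 1)‖ := by rw [norm_pow]
      _ = ‖∑ i ∈ Finset.range (n + 1), z ^ i‖ := by rw [hz]
      _ ≤ ∑ i ∈ Finset.range (n + 1), ‖z ^ i‖ := by
          exact norm_sum_le _ _
      _ = ∑ i ∈ Finset.range (n + 1), r ^ i := by
          apply Finset.sum_congr rfl; intro i _; rw [norm_pow]
    have hphir : 1 ≤ phi n r := (le_iff_phi n hrpos).mp htri
    -- r ≤ α
    have hrle : r ≤ α := by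
      by_contra hgt
      push_neg at hgt
      have := phi_anti n hαpos hgt
      rw [hphiα] at this
      linarith
    rcases lt_or_eq_of_le hrle with h | h
    · exact h
    -- equality case r = α : show z must be real nonneg, contradiction
    exfalso
    -- split the sum: range (n+1) = {0,1} ∪ Ico 2 (n+1)
    have hsplit : ∀ (w : ℂ → ℂ), True := fun _ => trivial
    have h2le : 2 ≤ n + 1 := by omega
    have hsumz : ∑ i ∈ Finset.range (n + 1), z ^ i
        = (1 + z) + ∑ i ∈ Finset.Ico 2 (n + 1), z ^ i := by
      rw [Finset.range_eq_Ico, ← Finset.sum_Ico_consecutive _ (by norm_num : 0 ≤ 2) h2le]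
      congr 1
      rw [← Finset.range_eq_Ico]
      simp [Finset.sum_range_succ]
    have hsumr : ∑ i ∈ Finset.range (n + 1), r ^ i
        = (1 + r) + ∑ i ∈ Finset.Ico 2 (n + 1), r ^ i := by
      rw [Finset.range_eq_Ico, ← Finset.sum_Ico_consecutive _ (by norm_num : 0 ≤ 2) h2le]
      congr 1
      rw [← Finset.range_eq_Ico]
      norm_num [Finset.sum_range_succ]
    have hroot_r : r ^ (n + 1) = ∑ i ∈ Finset.range (n + 1), r ^ i := by
      rw [h]; exact hαroot
    -- |∑ Ico part| ≤ ∑ r^i over Ico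
    have hIco : ‖∑ i ∈ Finset.Ico 2 (n + 1), z ^ i‖
        ≤ ∑ i ∈ Finset.Ico 2 (n + 1), r ^ i := by
      calc ‖∑ i ∈ Finset.Ico 2 (n + 1), z ^ i‖
          ≤ ∑ i ∈ Finset.Ico 2 (n + 1), ‖z ^ i‖ :=
            norm_sum_le _ _
      _ = ∑ i ∈ Finset.Ico 2 (n + 1), r ^ i := by
          apply Finset.sum_congr rfl; intro i _; rw [norm_pow]
    have hkey : (1 + r : ℝ) ≤ ‖1 + z‖ := by
      have hchain : r ^ (n + 1) ≤ ‖1 + z‖ + ∑ i ∈ Finset.Ico 2 (n + 1), r ^ i := by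
        calc r ^ (n + 1) = ‖z ^ (n + 1)‖ := by rw [norm_pow]
        _ = ‖(1 + z) + ∑ i ∈ Finset.Ico 2 (n + 1), z ^ i‖ := by rw [hz, hsumz]
        _ ≤ ‖1 + z‖ + ‖∑ i ∈ Finset.Ico 2 (n + 1), z ^ i‖ :=
            norm_add_le _ _
        _ ≤ ‖1 + z‖ + ∑ i ∈ Finset.Ico 2 (n + 1), r ^ i := by linarith
      rw [hroot_r, hsumr] at hchain
      linarith
    have htrieq : ‖1 + z‖ = 1 + r := by
      have hle' : ‖1 + z‖ ≤ ‖(1:ℂ)‖ + ‖z‖ := norm_add_le _ _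
      simp only [norm_one] at hle'
      linarith
    -- same ray ⇒ z is a nonneg real
    have hsr : SameRay ℝ (1 : ℂ) z := by
      rw [sameRay_iff_norm_add]
      have : ‖(1:ℂ) + z‖ = ‖1 + z‖ := rfl
      rw [this, htrieq]
      simp [hrdef]
    obtain ⟨t, ht0, htz⟩ := hsr.exists_nonneg_left (by norm_num)
    have hzt : z = (t : ℂ) := by
      rw [← htz]; simp [Complex.real_smul]
    have : r = t := by
      rw [hrdef, hzt, Complex.norm_of_nonneg ht0]
    apply hzα
    rw [hzt, ← this, h]
end
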